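/- Minimal-variance (systematic) resampling with expected counts n·p_i produces counts N_i ∈ {⌊n·p_i⌋, ⌈n·p_i⌉} with E[N_i] = n·p_i; in particular Var(N_i) ≤ 1/4 for each i. -/

import Mathlib

open MeasureTheory ProbabilityTheory

open Classical in
lemma sysres_count (n : ℕ) (hn : 0 < n) (a b x : ℝ) (ha : 0 ≤ a) (hab : a ≤ b)
    (hb : b ≤ 1) (hx : 0 ≤ x) (hx' : x < 1 / n) :
    (((Finset.range n).filter (fun j : ℕ => a ≤ x + (j : ℝ) / n ∧ x + (j : ℝ) / n < b)).card : ℤ)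
      = ⌈(n : ℝ) * b - n * x⌉ - ⌈(n : ℝ) * a - n * x⌉ := by
  have hn' : (0 : ℝ) < n := by exact_mod_cast hn
  have hnx : (n : ℝ) * x < 1 := by
    have := (lt_div_iff₀ hn').mp hx'
    linarith
  set A : ℤ := ⌈(n : ℝ) * a - n * x⌉ with hA
  set B : ℤ := ⌈(n : ℝ) * b - n * x⌉ with hB
  have hA0 : 0 ≤ A := by
    have h1 : ((-1 : ℤ) : ℝ) < (n : ℝ) * a - n * x := by push_cast; nlinarith
    have := Int.lt_ceil.mpr h1
    omega
  have hBn : B ≤ n := Int.ceil_le.mpr (by push_cast; nlinarith)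
  have hAB : A ≤ B := Int.ceil_le_ceil (by nlinarith)
  have hset : (Finset.range n).filter
      (fun j : ℕ => a ≤ x + (j : ℝ) / n ∧ x + (j : ℝ) / n < b) = Finset.Ico A.toNat B.toNat := by
    ext j
    simp only [Finset.mem_filter, Finset.mem_range, Finset.mem_Ico]
    have e : (n : ℝ) * ((j : ℝ) / n) = j := by field_simp
    have hj1 : (a ≤ x + (j : ℝ) / n) ↔ A ≤ (j : ℤ) := by
      rw [hA, Int.ceil_le]
      push_cast
      constructor
      · intro h
        have := mul_le_mul_of_nonneg_left h hn'.le
        rw [mul_add, e] at this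
        linarith
      · intro h
        have : (n : ℝ) * a ≤ n * (x + j / n) := by rw [mul_add, e]; linarith
        exact le_of_mul_le_mul_left this hn'
    have hj2 : (x + (j : ℝ) / n < b) ↔ (j : ℤ) < B := by
      rw [hB, Int.lt_ceil]
      push_cast
      constructor
      · intro h
        have := mul_lt_mul_of_pos_left h hn'
        rw [mul_add, e] at this
        linarith
      · intro h
        have : (n : ℝ) * (x + j / n) < n * b := by rw [mul_add, e]; linarith
        exact lt_of_mul_lt_mul_left this hn'.le
    rw [hj1, hj2]
    omega
  rw [hset, Nat.card_Ico]
  omega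

open Classical in
lemma sysres_meas (n : ℕ) (a b : ℝ) :
    Measurable (fun x : ℝ => (((Finset.range n).filter
      (fun j : ℕ => a ≤ x + (j : ℝ) / n ∧ x + (j : ℝ) / n < b)).card : ℝ)) := by
  have h : ∀ x : ℝ, (((Finset.range n).filter
      (fun j : ℕ => a ≤ x + (j : ℝ) / n ∧ x + (j : ℝ) / n < b)).card : ℝ)
      = ∑ j ∈ Finset.range n, if a ≤ x + (j : ℝ) / n ∧ x + (j : ℝ) / n < b then (1 : ℝ) else 0 := by
    intro x
    rw [Finset.card_filter]
    push_cast
    rfl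
  simp only [h]
  apply Finset.measurable_sum
  intro j _
  apply Measurable.ite _ measurable_const measurable_const
  exact (measurableSet_le measurable_const (measurable_id.add_const _)).inter
    (measurableSet_lt (measurable_id.add_const _) measurable_const)

lemma sysres_ceil_integral (n : ℕ) (hn : 0 < n) (c : ℝ) :
    IntegrableOn (fun x : ℝ => (⌈c - (n : ℝ) * x⌉ : ℝ)) (Set.Ico (0 : ℝ) (1 / n)) volume ∧
    ∫ x in Set.Ico (0 : ℝ) (1 / n), (⌈c - (n : ℝ) * x⌉ : ℝ) = c / n := by
  have hn' : (0 : ℝ) < n := by exact_mod_cast hn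
  set m : ℤ := ⌈c⌉ with hm
  set s : ℝ := (c - m + 1) / n with hs
  have hc1 : (m : ℝ) - 1 < c := by have := Int.ceil_lt_add_one c; linarith
  have hc2 : c ≤ m := Int.le_ceil c
  have hs0 : 0 ≤ s := div_nonneg (by linarith) hn'.le
  have hs1 : s ≤ 1 / n := by
    rw [hs, div_le_div_iff_of_pos_right hn']
    nlinarith
  have hns : (n : ℝ) * s = c - m + 1 := by rw [hs]; field_simp
  have e1 : Set.EqOn (fun x : ℝ => (⌈c - (n : ℝ) * x⌉ : ℝ)) (fun _ => (m : ℝ)) (Set.Ico 0 s) := by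
    intro x hx
    have h1 : c - (n : ℝ) * x ≤ c := by nlinarith [hx.1]
    have h2 : (m : ℝ) - 1 < c - n * x := by
      have := mul_lt_mul_of_pos_left hx.2 hn'
      rw [hns] at this
      linarith
    have : ⌈c - (n : ℝ) * x⌉ = m := by
      have hu : ⌈c - (n : ℝ) * x⌉ ≤ m := Int.ceil_le.mpr (le_trans h1 hc2)
      have hl : m - 1 < ⌈c - (n : ℝ) * x⌉ := Int.lt_ceil.mpr (by push_cast; linarith)
      omega
    simp [this]
  have e2 : Set.EqOn (fun x : ℝ => (⌈c - (n : ℝ) * x⌉ : ℝ)) (fun _ => ((m : ℝ) - 1))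
      (Set.Ico s (1 / n)) := by
    intro x hx
    have h1 : c - (n : ℝ) * x ≤ m - 1 := by
      have := mul_le_mul_of_nonneg_left hx.1 hn'.le
      rw [hns] at this
      linarith
    have h2 : (m : ℝ) - 2 < c - n * x := by
      have : (n : ℝ) * x < 1 := by
        have := mul_lt_mul_of_pos_left hx.2 hn'
        rw [mul_one_div, div_self hn'.ne'] at this
        linarith
      linarith
    have : ⌈c - (n : ℝ) * x⌉ = m - 1 := by
      have hu : ⌈c - (n : ℝ) * x⌉ ≤ m - 1 := Int.ceil_le.mpr (by push_cast; linarith)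
      have hl : m - 2 < ⌈c - (n : ℝ) * x⌉ := Int.lt_ceil.mpr (by push_cast; linarith)
      omega
    simp [this]
  have i1 : IntegrableOn (fun x : ℝ => (⌈c - (n : ℝ) * x⌉ : ℝ)) (Set.Ico 0 s) volume := by
    rw [integrableOn_congr_fun e1 measurableSet_Ico]
    exact integrableOn_const measure_Ico_lt_top.ne
  have i2 : IntegrableOn (fun x : ℝ => (⌈c - (n : ℝ) * x⌉ : ℝ)) (Set.Ico s (1 / n)) volume := by
    rw [integrableOn_congr_fun e2 measurableSet_Ico]
    exact integrableOn_const measure_Ico_lt_top.ne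
  have hsplit : Set.Ico (0 : ℝ) (1 / n) = Set.Ico 0 s ∪ Set.Ico s (1 / n) :=
    (Set.Ico_union_Ico_eq_Ico hs0 hs1).symm
  constructor
  · rw [hsplit]
    exact i1.union i2
  · rw [hsplit, setIntegral_union (Set.Ico_disjoint_Ico_same) measurableSet_Ico i1 i2,
      setIntegral_congr_fun measurableSet_Ico e1, setIntegral_congr_fun measurableSet_Ico e2,
      setIntegral_const, setIntegral_const, Real.volume_real_Ico, Real.volume_real_Ico,
      max_eq_left (by linarith), max_eq_left (by linarith)]
    simp only [smul_eq_mul, sub_zero, hs]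
    field_simp
    ring

open Classical in
theorem systematic_resampling_counts
    {Ω : Type*} [MeasurableSpace Ω] (P : Measure Ω) [IsProbabilityMeasure P]
    (K n : ℕ) (hn : 0 < n) (p : Fin K → ℝ) (hp : ∀ i, 0 ≤ p i)
    (hsum : ∑ i, p i = 1)
    (u : Ω → ℝ) (humeas : Measurable u)
    (hurange : ∀ ω, u ω ∈ Set.Ico (0 : ℝ) (1 / n))
    (hulaw : Measure.map u P = (n : ENNReal) • volume.restrict (Set.Ico (0 : ℝ) (1 / n)))
    (N : Fin K → Ω → ℕ)
    (hN : ∀ i ω, N i ω =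
      ((Finset.range n).filter (fun j : ℕ =>
        (∑ l ∈ Finset.univ.filter (fun l => l < i), p l) ≤ u ω + (j : ℝ) / n ∧
        u ω + (j : ℝ) / n <
          (∑ l ∈ Finset.univ.filter (fun l => l < i), p l) + p i)).card) :
    (∀ i ω, N i ω = ⌊(n : ℝ) * p i⌋₊ ∨ N i ω = ⌈(n : ℝ) * p i⌉₊) ∧
    (∀ i, ∫ ω, (N i ω : ℝ) ∂P = n * p i) ∧
    (∀ i, variance (fun ω => (N i ω : ℝ)) P ≤ 1 / 4) := by
  have hn' : (0 : ℝ) < n := by exact_mod_cast hn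
  have ha0 : ∀ i : Fin K, 0 ≤ ∑ l ∈ Finset.univ.filter (fun l => l < i), p l :=
    fun i => Finset.sum_nonneg fun l _ => hp l
  have hb1 : ∀ i : Fin K, (∑ l ∈ Finset.univ.filter (fun l => l < i), p l) + p i ≤ 1 := by
    intro i
    rw [← hsum]
    have h1 : (∑ l ∈ Finset.univ.filter (fun l => l < i), p l) + p i
        = ∑ l ∈ insert i (Finset.univ.filter (fun l => l < i)), p l := by
      rw [Finset.sum_insert (by simp)]
      ring
    rw [h1]
    exact Finset.sum_le_sum_of_subset_of_nonneg (Finset.subset_univ _) (fun l _ _ => hp l)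
  -- pointwise count identity
  have key : ∀ (i : Fin K) ω, ((N i ω : ℤ)) =
      ⌈(n : ℝ) * ((∑ l ∈ Finset.univ.filter (fun l => l < i), p l) + p i) - n * u ω⌉
      - ⌈(n : ℝ) * (∑ l ∈ Finset.univ.filter (fun l => l < i), p l) - n * u ω⌉ := by
    intro i ω
    rw [hN i ω]
    exact sysres_count n hn _ _ (u ω) (ha0 i) (le_add_of_nonneg_right (hp i)) (hb1 i)
      (hurange ω).1 (hurange ω).2
  have part1 : ∀ i ω, N i ω = ⌊(n : ℝ) * p i⌋₊ ∨ N i ω = ⌈(n : ℝ) * p i⌉₊ := by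
    intro i ω
    have hkey := key i ω
    set r := (n : ℝ) * (∑ l ∈ Finset.univ.filter (fun l => l < i), p l) - n * u ω with hr
    have hb_eq : (n : ℝ) * ((∑ l ∈ Finset.univ.filter (fun l => l < i), p l) + p i) - n * u ω
        = r + n * p i := by rw [hr]; ring
    rw [hb_eq] at hkey
    have h1 : ⌈r⌉ + ⌊(n : ℝ) * p i⌋ ≤ ⌈r + (n : ℝ) * p i⌉ := by
      rw [← Int.ceil_add_intCast]
      exact Int.ceil_le_ceil (by linarith [Int.floor_le ((n : ℝ) * p i)])
    have h2 : ⌈r + (n : ℝ) * p i⌉ ≤ ⌈r⌉ + ⌈(n : ℝ) * p i⌉ := Int.ceil_add_le _ _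
    have h3 : ⌈(n : ℝ) * p i⌉ ≤ ⌊(n : ℝ) * p i⌋ + 1 := Int.ceil_le_floor_add_one _
    have hnp : 0 ≤ (n : ℝ) * p i := mul_nonneg hn'.le (hp i)
    have hfl : (⌊(n : ℝ) * p i⌋₊ : ℤ) = ⌊(n : ℝ) * p i⌋ := Int.natCast_floor_eq_floor hnp
    have hcl : (⌈(n : ℝ) * p i⌉₊ : ℤ) = ⌈(n : ℝ) * p i⌉ := Int.natCast_ceil_eq_ceil hnp
    omega
  have hgmeas : ∀ i : Fin K, Measurable (fun x : ℝ => (((Finset.range n).filter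
      (fun j : ℕ => (∑ l ∈ Finset.univ.filter (fun l => l < i), p l) ≤ x + (j : ℝ) / n ∧
        x + (j : ℝ) / n < (∑ l ∈ Finset.univ.filter (fun l => l < i), p l) + p i)).card : ℝ)) :=
    fun i => sysres_meas n _ _
  have hXeq : ∀ i : Fin K, (fun ω => (N i ω : ℝ)) = (fun x : ℝ => (((Finset.range n).filter
      (fun j : ℕ => (∑ l ∈ Finset.univ.filter (fun l => l < i), p l) ≤ x + (j : ℝ) / n ∧
        x + (j : ℝ) / n < (∑ l ∈ Finset.univ.filter (fun l => l < i), p l) + p i)).card : ℝ)) ∘ u :=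
    fun i => funext fun ω => by rw [hN i ω]; rfl
  have part2 : ∀ i, ∫ ω, (N i ω : ℝ) ∂P = n * p i := by
    intro i
    have h1 : ∫ ω, (N i ω : ℝ) ∂P = ∫ x, (((Finset.range n).filter
        (fun j : ℕ => (∑ l ∈ Finset.univ.filter (fun l => l < i), p l) ≤ x + (j : ℝ) / n ∧
          x + (j : ℝ) / n < (∑ l ∈ Finset.univ.filter (fun l => l < i), p l) + p i)).card : ℝ)
        ∂(Measure.map u P) := by
      rw [integral_map humeas.aemeasurable (hgmeas i).aestronglyMeasurable]
      simp only [hN]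
    rw [h1, hulaw, integral_smul_measure]
    have hEq : Set.EqOn
        (fun x : ℝ => (((Finset.range n).filter
          (fun j : ℕ => (∑ l ∈ Finset.univ.filter (fun l => l < i), p l) ≤ x + (j : ℝ) / n ∧
            x + (j : ℝ) / n < (∑ l ∈ Finset.univ.filter (fun l => l < i), p l) + p i)).card : ℝ))
        (fun x : ℝ =>
          (⌈(n : ℝ) * ((∑ l ∈ Finset.univ.filter (fun l => l < i), p l) + p i) - n * x⌉ : ℝ)
          - (⌈(n : ℝ) * (∑ l ∈ Finset.univ.filter (fun l => l < i), p l) - n * x⌉ : ℝ))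
        (Set.Ico 0 (1 / n)) := by
      intro x hx
      dsimp only
      exact_mod_cast sysres_count n hn _ _ x (ha0 i) (le_add_of_nonneg_right (hp i)) (hb1 i)
        hx.1 hx.2
    rw [setIntegral_congr_fun measurableSet_Ico hEq]
    have c1 := sysres_ceil_integral n hn
      ((n : ℝ) * ((∑ l ∈ Finset.univ.filter (fun l => l < i), p l) + p i))
    have c2 := sysres_ceil_integral n hn
      ((n : ℝ) * (∑ l ∈ Finset.univ.filter (fun l => l < i), p l))
    rw [integral_sub c1.1 c2.1, c1.2, c2.2, ENNReal.toReal_natCast, smul_eq_mul]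
    field_simp
    ring
  refine ⟨part1, part2, ?_⟩
  intro i
  have hX : AEMeasurable (fun ω => (N i ω : ℝ)) P := by
    rw [hXeq i]
    exact ((hgmeas i).comp humeas).aemeasurable
  have hnp : 0 ≤ (n : ℝ) * p i := mul_nonneg hn'.le (hp i)
  have hbdd : ∀ᵐ ω ∂P, (N i ω : ℝ) ∈
      Set.Icc ((⌊(n : ℝ) * p i⌋₊ : ℝ)) ((⌈(n : ℝ) * p i⌉₊ : ℝ)) := by
    refine Filter.Eventually.of_forall fun ω => ?_
    have hfc : (⌊(n : ℝ) * p i⌋₊ : ℝ) ≤ (⌈(n : ℝ) * p i⌉₊ : ℝ) := by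
      exact_mod_cast Nat.floor_le_ceil _
    rcases part1 i ω with h | h <;> rw [h]
    · exact ⟨le_refl _, hfc⟩
    · exact ⟨hfc, le_refl _⟩
  calc variance (fun ω => (N i ω : ℝ)) P
      ≤ (((⌈(n : ℝ) * p i⌉₊ : ℝ) - (⌊(n : ℝ) * p i⌋₊ : ℝ)) / 2) ^ 2 :=
        variance_le_sq_of_bounded hbdd hX
    _ ≤ 1 / 4 := by
        have h1 : ⌈(n : ℝ) * p i⌉₊ ≤ ⌊(n : ℝ) * p i⌋₊ + 1 := Nat.ceil_le_floor_add_one _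
        have h2 : ⌊(n : ℝ) * p i⌋₊ ≤ ⌈(n : ℝ) * p i⌉₊ := Nat.floor_le_ceil _
        have h1' : (⌈(n : ℝ) * p i⌉₊ : ℝ) ≤ (⌊(n : ℝ) * p i⌋₊ : ℝ) + 1 := by exact_mod_cast h1
        have h2' : (⌊(n : ℝ) * p i⌋₊ : ℝ) ≤ (⌈(n : ℝ) * p i⌉₊ : ℝ) := by exact_mod_cast h2
        nlinarith
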